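/- arXiv:1410.3439 — 8 statements merged into one kernel-verified Lean document; each statement's English description precedes it below -/
import Mathlib

section
/- Let m, n ∈ k* with k a field of characteristic ≠ 2, M = [[0,1],[m,0]], N = [[0,1],[n,0]]. If m and n lie in the same square class of k (i.e. m/n is a square in k*), then the involutions Inn(M) and Inn(N) of SL₂(k) are conjugate by an automorphism of SL₂(k) of the form Inn(A) with A ∈ GL₂(k). -/
open Matrix

noncomputable def tau {k : Type*} [Field k] (m : k) (g : Matrix (Fin 2) (Fin 2) k) :
    Matrix (Fin 2) (Fin 2) k := !![0,1;m,0] * g * (!![0,1;m,0])⁻¹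

/-- If m and n are in the same square class of k*, then Inn(M) and Inn(N) are conjugate
over k: there is A ∈ GL₂(k) with Inn(A) ∘ Inn(M) ∘ Inn(A)⁻¹ = Inn(N) on SL₂(k). -/
theorem stmt3 {k : Type*} [Field k] (hchar : (2 : k) ≠ 0) (m n : k) (hm : m ≠ 0) (hn : n ≠ 0)
    (hsq : ∃ c : k, c ≠ 0 ∧ m = c ^ 2 * n) :
    ∃ A : Matrix (Fin 2) (Fin 2) k, A.det ≠ 0 ∧
      ∀ g : Matrix (Fin 2) (Fin 2) k, g.det = 1 →
        A * tau m (A⁻¹ * g * A) * A⁻¹ = tau n g := by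
  obtain ⟨c, hc, rfl⟩ := hsq
  refine ⟨!![c,0;0,1], ?_, ?_⟩
  · simp [Matrix.det_fin_two_of, hc]
  · intro g _
    have hMinv : (!![0,1;c^2*n,0])⁻¹ = !![0, 1/(c^2*n); 1, 0] := by
      apply Matrix.inv_eq_right_inv
      ext i j
      fin_cases i <;> fin_cases j <;>
        simp [Matrix.mul_apply, Fin.sum_univ_succ] <;> field_simp <;> ring
    have hNinv : (!![0,1;n,0])⁻¹ = !![0, 1/n; 1, 0] := by
      apply Matrix.inv_eq_right_inv
      ext i j
      fin_cases i <;> fin_cases j <;>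
        simp [Matrix.mul_apply, Fin.sum_univ_succ] <;> field_simp
    have hAinv : (!![c,0;0,(1:k)])⁻¹ = !![c⁻¹, 0; 0, 1] := by
      apply Matrix.inv_eq_right_inv
      ext i j
      fin_cases i <;> fin_cases j <;>
        simp [Matrix.mul_apply, Fin.sum_univ_succ] <;> field_simp
    have hg : g = !![g 0 0, g 0 1; g 1 0, g 1 1] := by
      ext i j; fin_cases i <;> fin_cases j <;> rfl
    rw [hg]
    simp only [tau, hMinv, hNinv, hAinv]
    ext i j
    fin_cases i <;> fin_cases j <;>
      simp [Matrix.mul_apply, Fin.sum_univ_succ] <;> field_simp <;> ring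
end

section
/- Let k be a field of characteristic ≠ 2 and m ∈ k*, with involution τ = τ_m of SL₂(k). Then SL₂(k) = H Q̃ U, where H is the fixed-point group of τ, Q̃ = {g ∈ SL₂(k) : τ(g) = g⁻¹} is the extended symmetric space, and U = {[[1,u],[0,1]] : u ∈ k} is the upper unitriangular subgroup. That is, every g ∈ SL₂(k) can be written g = h q u with h ∈ H, q ∈ Q̃, u ∈ U. -/
open Matrix

section aux
variable {k : Type*} [Field k]

lemma Minv (m : k) (hm : m ≠ 0) : (!![0,1;m,0] : Matrix (Fin 2) (Fin 2) k)⁻¹ = !![0,1/m;1,0] := by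
  apply inv_eq_right_inv
  rw [Matrix.mul_fin_two, Matrix.one_fin_two]
  ext i j
  fin_cases i <;> fin_cases j <;> simp [hm]

lemma tau_eq (m : k) (hm : m ≠ 0) (g : Matrix (Fin 2) (Fin 2) k) :
    tau m g = !![g 1 1, g 1 0 / m; m * g 0 1, g 0 0] := by
  rw [tau, Minv m hm, Matrix.eta_fin_two g, Matrix.mul_fin_two, Matrix.mul_fin_two]
  ext i j
  fin_cases i <;> fin_cases j <;> simp [hm] <;> field_simp

lemma tau_one (m : k) (hm : m ≠ 0) : tau m (1 : Matrix (Fin 2) (Fin 2) k) = 1 := by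
  have hd : (!![0,1;m,0] : Matrix (Fin 2) (Fin 2) k).det = -m := by
    rw [Matrix.det_fin_two_of]; ring
  rw [tau, mul_one, Matrix.mul_nonsing_inv]
  rw [hd]
  exact (neg_ne_zero.mpr hm).isUnit

lemma mem_H (m : k) (hm : m ≠ 0) (x y : k) :
    tau m !![x,y;m*y,x] = !![x,y;m*y,x] := by
  rw [tau_eq m hm]
  have e11 : (!![x,y;m*y,x] : Matrix (Fin 2) (Fin 2) k) 1 1 = x := by simp
  have e10 : (!![x,y;m*y,x] : Matrix (Fin 2) (Fin 2) k) 1 0 = m*y := by simp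
  have e01 : (!![x,y;m*y,x] : Matrix (Fin 2) (Fin 2) k) 0 1 = y := by simp
  have e00 : (!![x,y;m*y,x] : Matrix (Fin 2) (Fin 2) k) 0 0 = x := by simp
  rw [e11, e10, e01, e00, mul_div_cancel_left₀ y hm]

lemma inv_det_one (g : Matrix (Fin 2) (Fin 2) k) (hg : g.det = 1) :
    g⁻¹ = !![g 1 1, -g 0 1; -g 1 0, g 0 0] := by
  rw [Matrix.det_fin_two] at hg
  apply inv_eq_right_inv
  ext i j
  fin_cases i <;> fin_cases j <;>
    simp [Matrix.mul_apply, Fin.sum_univ_two, Matrix.one_apply] <;>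
    first | ring1 | linear_combination hg

lemma mem_Q (m : k) (hm : m ≠ 0) (g : Matrix (Fin 2) (Fin 2) k) (hg : g.det = 1)
    (hq : g 1 0 = -(m * g 0 1)) : tau m g = g⁻¹ := by
  have h2 : -(m * g 0 1) / m = -g 0 1 := by field_simp
  rw [tau_eq m hm, inv_det_one g hg, hq, neg_neg, h2]

/-- If the top-left entry is nonzero, g ∈ Q̃ U. -/
lemma key (m : k) (hm : m ≠ 0) (g : Matrix (Fin 2) (Fin 2) k) (hg : g.det = 1)
    (ha : g 0 0 ≠ 0) :
    ∃ q : Matrix (Fin 2) (Fin 2) k, ∃ u : k,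
      (q.det = 1 ∧ tau m q = q⁻¹) ∧ g = q * !![1, u; 0, 1] := by
  set a := g 0 0 with hA; set b := g 0 1; set c := g 1 0; set d := g 1 1
  have hdet : a * d - b * c = 1 := by rw [← Matrix.det_fin_two]; exact hg
  set u : k := (m * b + c) / (a * m) with hu
  refine ⟨!![a, b - a*u; c, d - c*u], u, ⟨?_, ?_⟩, ?_⟩
  · rw [Matrix.det_fin_two_of]; linear_combination hdet
  · apply mem_Q m hm
    · rw [Matrix.det_fin_two_of]; linear_combination hdet
    · have e10 : (!![a, b - a*u; c, d - c*u] : Matrix (Fin 2) (Fin 2) k) 1 0 = c := by simp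
      have e01 : (!![a, b - a*u; c, d - c*u] : Matrix (Fin 2) (Fin 2) k) 0 1 = b - a*u := by simp
      rw [e10, e01, hu]
      field_simp
      ring
  · rw [Matrix.mul_fin_two, Matrix.eta_fin_two g]
    ext i j
    fin_cases i <;> fin_cases j <;> simp <;> ring

end aux

/-- SL₂(k) = H Q̃ U : every g ∈ SL₂(k) factors as g = h q u with h ∈ H, q ∈ Q̃,
u upper unitriangular. -/
theorem stmt6 {k : Type*} [Field k] (hchar : (2 : k) ≠ 0) (m : k) (hm : m ≠ 0) :
    ∀ g : Matrix (Fin 2) (Fin 2) k, g.det = 1 →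
      ∃ h q : Matrix (Fin 2) (Fin 2) k, ∃ u : k,
        (h.det = 1 ∧ tau m h = h) ∧ (q.det = 1 ∧ tau m q = q⁻¹) ∧
        g = h * q * !![1, u; 0, 1] := by
  intro g hg
  by_cases ha : g 0 0 = 0
  · have hdet : g 0 0 * g 1 1 - g 0 1 * g 1 0 = 1 := by rw [← Matrix.det_fin_two]; exact hg
    have hb : g 0 1 ≠ 0 := by
      intro h0; rw [ha, h0] at hdet; simp at hdet
    have hc : g 1 0 ≠ 0 := by
      intro h0; rw [ha, h0] at hdet; simp at hdet
    by_cases ht : ∃ t : k, t ≠ 0 ∧ 1 - m * t^2 ≠ 0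
    · obtain ⟨t, ht0, hte⟩ := ht
      set x : k := (1 + m*t^2) / (1 - m*t^2) with hx
      set y : k := (2*t) / (1 - m*t^2) with hy
      have hy0 : y ≠ 0 := by
        rw [hy]; exact div_ne_zero (mul_ne_zero hchar ht0) hte
      have hdh : (!![x, y; m*y, x] : Matrix (Fin 2) (Fin 2) k).det = 1 := by
        rw [Matrix.det_fin_two_of, hx, hy]; field_simp; ring
      have hdh' : (!![x, -y; -(m*y), x] : Matrix (Fin 2) (Fin 2) k).det = 1 := by
        rw [Matrix.det_fin_two_of, hx, hy]; field_simp; ring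
      have e : x*x - y*(m*y) = 1 := by
        rw [Matrix.det_fin_two_of] at hdh; linear_combination hdh
      clear_value x y
      have hinv : (!![x, y; m*y, x] : Matrix (Fin 2) (Fin 2) k) * !![x, -y; -(m*y), x] = 1 := by
        ext i j
        fin_cases i <;> fin_cases j <;>
          simp [Matrix.mul_apply, Fin.sum_univ_two, Matrix.one_apply] <;>
          first | ring1 | linear_combination e
      set g' := !![x, -y; -(m*y), x] * g with hg'
      have hhg' : !![x, y; m*y, x] * g' = g := by
        rw [hg', ← mul_assoc, hinv, one_mul]
      have hdg' : g'.det = 1 := by rw [hg', Matrix.det_mul, hdh', hg, one_mul]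
      have ha00 : g' 0 0 = x * g 0 0 + -y * g 1 0 := by
        rw [hg', Matrix.mul_apply, Fin.sum_univ_two]; simp
      have ha' : g' 0 0 ≠ 0 := by
        rw [ha00, ha, mul_zero, zero_add, neg_mul]
        exact neg_ne_zero.mpr (mul_ne_zero hy0 hc)
      obtain ⟨q, u, hq, hgu⟩ := key m hm g' hdg' ha'
      exact ⟨!![x, y; m*y, x], q, u, ⟨hdh, mem_H m hm x y⟩, hq,
        by rw [mul_assoc, ← hgu, hhg']⟩
    · push_neg at ht
      have hmb : 1 - m * (g 0 1)^2 = 0 := by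
        by_contra h
        exact h (ht _ hb)
      have hbc : g 0 1 * g 1 0 = -1 := by rw [ha] at hdet; linear_combination -hdet
      refine ⟨1, g, 0, ⟨Matrix.det_one, tau_one m hm⟩, ⟨hg, mem_Q m hm g hg ?_⟩, ?_⟩
      · apply mul_left_cancel₀ hb
        linear_combination hbc - hmb
      · rw [one_mul, ← Matrix.one_fin_two, mul_one]
  · obtain ⟨q, u, hq, hgu⟩ := key m hm g hg ha
    exact ⟨1, q, u, ⟨Matrix.det_one, tau_one m hm⟩, hq, by rw [one_mul, ← hgu]⟩
end

section
/- Let τ = τ₁ be conjugation by [[0,1],[1,0]] on SL₂(ℝ). The element g = [[1, 2(√5−3)⁻¹],[(√5−3)/2, 2]] lies in SL₂(ℝ) but not in H Q̃, where H is the fixed-point group of τ and Q̃ its extended symmetric space. In particular SL₂(ℝ) ≠ H Q̃. -/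
open Matrix

/-- For τ = τ₁ on SL₂(ℝ), the element g = [[1, 2(√5-3)⁻¹],[(√5-3)/2, 2]] lies in SL₂(ℝ)
but not in H Q̃; in particular SL₂(ℝ) ≠ H Q̃. -/
theorem stmt7 :
    (!![(1 : ℝ), 2 * (Real.sqrt 5 - 3)⁻¹; (Real.sqrt 5 - 3) / 2, 2]).det = 1 ∧
    ¬ ∃ h q : Matrix (Fin 2) (Fin 2) ℝ,
        (h.det = 1 ∧ tau 1 h = h) ∧ (q.det = 1 ∧ tau 1 q = q⁻¹) ∧
        !![(1 : ℝ), 2 * (Real.sqrt 5 - 3)⁻¹; (Real.sqrt 5 - 3) / 2, 2] = h * q := by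
  have s5 : Real.sqrt 5 ^ 2 = 5 := Real.sq_sqrt (by norm_num)
  have slt : Real.sqrt 5 < 3 := by nlinarith [Real.sqrt_nonneg 5]
  have sne : Real.sqrt 5 - 3 ≠ 0 := by nlinarith
  have Minv : (!![(0:ℝ),1;1,0])⁻¹ = !![0,1;1,0] := by
    apply Matrix.inv_eq_right_inv
    rw [Matrix.one_fin_two]
    norm_num [Matrix.mul_fin_two]
  constructor
  · rw [Matrix.det_fin_two_of]
    field_simp
    norm_num
  · rintro ⟨h, q, ⟨hd, hτ⟩, ⟨qd, qτ⟩, hg⟩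
    simp only [tau] at hτ qτ
    rw [Minv] at hτ qτ
    have qinv : q⁻¹ = !![q 1 1, -(q 0 1); -(q 1 0), q 0 0] := by
      rw [Matrix.inv_def, qd, Matrix.adjugate_fin_two q]
      simp
    rw [qinv] at qτ
    rw [Matrix.det_fin_two] at hd
    rw [Matrix.eta_fin_two h] at hτ hg
    rw [Matrix.eta_fin_two q] at qτ hg
    -- entry relations for h : h 1 1 = h 0 0, h 1 0 = h 0 1
    have h00 := congrFun (congrFun hτ 0) 0
    have h01 := congrFun (congrFun hτ 0) 1
    simp [Matrix.mul_apply, Fin.sum_univ_two] at h00 h01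
    -- entry relation for q : q 0 1 = -(q 1 0)
    have q01 := congrFun (congrFun qτ 0) 1
    simp [Matrix.mul_apply, Fin.sum_univ_two] at q01
    -- entries of the product equation
    have g00 := congrFun (congrFun hg 0) 0
    have g01 := congrFun (congrFun hg 0) 1
    have g10 := congrFun (congrFun hg 1) 0
    have g11 := congrFun (congrFun hg 1) 1
    simp [Matrix.mul_apply, Fin.sum_univ_two] at g00 g01 g10 g11
    set a := h 0 0 with ha
    set b := h 0 1 with hb
    set p := q 0 0 with hp
    set r := q 0 1 with hr
    set t := q 1 1 with ht
    have h2 : 2 * (Real.sqrt 5 - 3)⁻¹ = -(Real.sqrt 5 + 3) / 2 := by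
      field_simp
      nlinarith
    rw [h2] at g01
    rw [h00, h01] at g10 g11 hd
    rw [q01] at g00 g10
    have e1 : a * (p + t) = 3 := by linear_combination (-1 : ℝ) * g00 - g11
    have e2 : b * (p + t) = -3 := by linear_combination (-1 : ℝ) * g01 - g10
    have hu : (p + t) * (p + t) = 0 := by
      linear_combination (a*(p+t)+3)*e1 - (b*(p+t)-3)*e2 - (p+t)*(p+t)*hd
    have : p + t = 0 := by
      have := mul_self_eq_zero.mp hu
      exact this
    rw [this] at e1
    norm_num at e1
end

section
/- Let k be an algebraically closed field of characteristic ≠ 2 and τ = τ₁ conjugation by [[0,1],[1,0]] on SL₂(k). Then {g ∈ SL₂(k) : τ(g) = g⁻¹} = {g τ(g)⁻¹ : g ∈ SL₂(k)}. -/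
open Matrix

section aux

variable {k : Type*} [Field k]

lemma fin_two_ext_aux {a b c d e f g h : k} (h1 : a = e) (h2 : b = f)
    (h3 : c = g) (h4 : d = h) : !![a,b;c,d] = !![e,f;g,h] := by
  subst h1 h2 h3 h4; rfl

lemma Minv_aux : (!![0,(1:k);1,0])⁻¹ = !![0,1;1,0] :=
  Matrix.inv_eq_right_inv (by simp [Matrix.mul_fin_two, Matrix.one_fin_two])

lemma tau_fin_two_aux (a b c d : k) : tau 1 !![a,b;c,d] = !![d,c;b,a] := by
  simp only [tau, Minv_aux, Matrix.mul_fin_two]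
  norm_num

lemma sym_form_aux (A B D : k) (h : A*D + B*B = 1) :
    (!![A,B;-B,D]).det = 1 ∧ tau 1 !![A,B;-B,D] = (!![A,B;-B,D])⁻¹ := by
  constructor
  · rw [Matrix.det_fin_two_of]; linear_combination h
  · rw [tau_fin_two_aux]
    refine (Matrix.inv_eq_right_inv ?_).symm
    rw [Matrix.mul_fin_two, Matrix.one_fin_two]
    exact fin_two_ext_aux (by linear_combination h) (by ring) (by ring)
      (by linear_combination h)

lemma q_form_aux (p q r s : k) (h : p*s - q*r = 1) :
    !![p,q;r,s] * (tau 1 !![p,q;r,s])⁻¹ =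
      !![p*p - q*q, q*s - p*r; r*p - s*q, s*s - r*r] := by
  rw [tau_fin_two_aux]
  have hinv : (!![s,r;q,p])⁻¹ = !![p,-r;-q,s] := by
    refine Matrix.inv_eq_right_inv ?_
    rw [Matrix.mul_fin_two, Matrix.one_fin_two]
    exact fin_two_ext_aux (by linear_combination h) (by ring) (by ring)
      (by linear_combination h)
  rw [hinv, Matrix.mul_fin_two]
  exact fin_two_ext_aux (by ring) (by ring) (by ring) (by ring)

end aux

/-- For k algebraically closed of characteristic ≠ 2 and τ = τ₁ on SL₂(k),
the extended symmetric space equals the symmetric space. -/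
theorem stmt9 {k : Type*} [Field k] [IsAlgClosed k] (hchar : (2 : k) ≠ 0) :
    {g : Matrix (Fin 2) (Fin 2) k | g.det = 1 ∧ tau 1 g = g⁻¹} =
      {q : Matrix (Fin 2) (Fin 2) k |
        ∃ g : Matrix (Fin 2) (Fin 2) k, g.det = 1 ∧ q = g * (tau 1 g)⁻¹} := by
  ext x
  simp only [Set.mem_setOf_eq]
  constructor
  · rintro ⟨hdet, htau⟩
    obtain ⟨a, b, c, d, rfl⟩ : ∃ a b c d, x = !![a,b;c,d] :=
      ⟨_, _, _, _, Matrix.eta_fin_two x⟩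
    rw [Matrix.det_fin_two_of] at hdet
    have hinv : (!![a,b;c,d])⁻¹ = !![d,-b;-c,a] := by
      refine Matrix.inv_eq_right_inv ?_
      rw [Matrix.mul_fin_two, Matrix.one_fin_two]
      exact fin_two_ext_aux (by linear_combination hdet) (by ring) (by ring)
        (by linear_combination hdet)
    rw [tau_fin_two_aux, hinv] at htau
    have hcb : c = -b := by
      have := congrFun (congrFun htau 0) 1
      simpa using this
    subst hcb
    by_cases ha : a = 0
    · subst ha
      have hb2 : b * b = 1 := by linear_combination hdet
      have hsplit : (b - 1) * (b + 1) = 0 := by linear_combination hb2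
      rcases mul_eq_zero.mp hsplit with h1 | h1
      -- b = 1
      · have hb : b = 1 := by linear_combination h1
        subst hb
        refine ⟨!![1, 1; (d-1)/2, (d+1)/2], ?_, ?_⟩
        · rw [Matrix.det_fin_two_of]; field_simp <;> ring
        · rw [q_form_aux _ _ _ _ (by field_simp <;> ring)]
          refine fin_two_ext_aux (by ring) (by field_simp <;> ring)
            (by field_simp <;> ring) (by field_simp <;> ring)
      -- b = -1
      · have hb : b = -1 := by linear_combination h1
        subst hb
        refine ⟨!![1, -1; (1-d)/2, (1+d)/2], ?_, ?_⟩
        · rw [Matrix.det_fin_two_of]; field_simp <;> ring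
        · rw [q_form_aux _ _ _ _ (by field_simp <;> ring)]
          refine fin_two_ext_aux (by ring) (by field_simp <;> ring)
            (by field_simp <;> ring) (by field_simp <;> ring)
    · obtain ⟨p, hp⟩ : ∃ p : k, p ^ 2 = a :=
        IsAlgClosed.exists_pow_nat_eq a (n := 2) (by norm_num)
      have hp0 : p ≠ 0 := by
        intro h0; apply ha; rw [← hp, h0]; ring
      have had : a * d = 1 - b * b := by linear_combination hdet
      refine ⟨!![p, 0; -b/p, 1/p], ?_, ?_⟩
      · rw [Matrix.det_fin_two_of]; field_simp <;> ring
      · rw [q_form_aux _ _ _ _ (by field_simp <;> ring)]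
        refine fin_two_ext_aux (by linear_combination -hp) (by field_simp <;> ring)
          (by field_simp <;> ring) ?_
        field_simp
        linear_combination d * hp + had
  · rintro ⟨g, hdet, rfl⟩
    obtain ⟨p, q, r, s, rfl⟩ : ∃ p q r s, g = !![p,q;r,s] :=
      ⟨_, _, _, _, Matrix.eta_fin_two g⟩
    rw [Matrix.det_fin_two_of] at hdet
    rw [q_form_aux _ _ _ _ hdet]
    have hform : !![p*p - q*q, q*s - p*r; r*p - s*q, s*s - r*r] =
        !![p*p - q*q, q*s - p*r; -(q*s - p*r), s*s - r*r] :=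
      fin_two_ext_aux rfl rfl (by ring) rfl
    rw [hform]
    exact sym_form_aux _ _ _ (by linear_combination (p*s - q*r + 1) * hdet)
end

section
/- Let p ≡ 3 mod 4 (e.g. p = 3) and let τ = τ_p be conjugation by [[0,1],[p,0]] on SL₂(ℚ_p). Then the element q = diag(1/p, p) lies in the extended symmetric space {g : τ(g)=g⁻¹} but is not of the form g τ(g)⁻¹ for any g ∈ SL₂(ℚ_p). Hence the symmetric space is strictly contained in the extended symmetric space. -/
open Matrix

lemma val_eq_of_norm_eq {p : ℕ} [Fact p.Prime] {a b : ℚ_[p]} (ha : a ≠ 0) (hb : b ≠ 0)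
    (h : ‖a‖ = ‖b‖) : a.valuation = b.valuation := by
  have hp1 : (1:ℝ) < (p:ℝ) := by exact_mod_cast (Fact.out : p.Prime).one_lt
  rw [Padic.norm_eq_zpow_neg_valuation ha, Padic.norm_eq_zpow_neg_valuation hb] at h
  exact neg_injective ((zpow_right_strictMono₀ hp1).injective h)

lemma no_sol (p : ℕ) [Fact p.Prime] (hp : p % 4 = 3) (x y : ℚ_[p]) :
    x ^ 2 + 1 ≠ (p : ℚ_[p]) * y ^ 2 := by
  intro h
  have hp1 : (1:ℝ) < (p:ℝ) := by exact_mod_cast (Fact.out : p.Prime).one_lt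
  have hp0 : (p : ℚ_[p]) ≠ 0 := Nat.cast_ne_zero.2 (Fact.out : p.Prime).ne_zero
  have hvr : ∀ _ : y ≠ 0, ((p : ℚ_[p]) * y ^ 2).valuation = 1 + (y.valuation + y.valuation) := by
    intro hy
    rw [Padic.valuation_mul hp0 (pow_ne_zero _ hy), Padic.valuation_p, sq,
      Padic.valuation_mul hy hy]
  have hx1 : ‖x‖ ≤ 1 := by
    by_contra hx
    push_neg at hx
    have hxne : x ≠ 0 := by rintro rfl; norm_num at hx
    have hne : ‖x ^ 2‖ ≠ ‖(1 : ℚ_[p])‖ := by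
      rw [norm_pow, norm_one]; nlinarith
    have hmax : ‖x ^ 2 + 1‖ = ‖x ^ 2‖ := by
      rw [Padic.add_eq_max_of_ne hne, max_eq_left]
      rw [norm_pow, norm_one]; nlinarith
    have hxy : x ^ 2 + 1 ≠ 0 := by
      intro h0
      rw [h0, norm_zero, norm_pow] at hmax; nlinarith
    have hyne : y ≠ 0 := by
      rintro rfl
      rw [h] at hxy
      simp at hxy
    have hval := val_eq_of_norm_eq hxy (pow_ne_zero 2 hxne) hmax
    rw [h, hvr hyne, sq, Padic.valuation_mul hxne hxne] at hval
    omega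
  have hy1 : ‖y‖ ≤ 1 := by
    by_cases hy : y = 0
    · simp [hy]
    by_contra hyn
    push_neg at hyn
    have h1 : ¬ (0 : ℤ) ≤ y.valuation :=
      fun hv => absurd ((Padic.norm_le_one_iff_val_nonneg y).2 hv) (not_le.2 hyn)
    have hxy : x ^ 2 + 1 ≠ 0 := by
      rw [h]; exact mul_ne_zero hp0 (pow_ne_zero _ hy)
    have h2 : ‖x ^ 2 + 1‖ ≤ 1 := by
      refine le_trans (Padic.nonarchimedean _ _) (max_le ?_ (by simp))
      rw [norm_pow]; nlinarith [norm_nonneg x]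
    rw [Padic.norm_le_one_iff_val_nonneg, h, hvr hy] at h2
    omega
  set X : ℤ_[p] := ⟨x, hx1⟩ with hX
  set Y : ℤ_[p] := ⟨y, hy1⟩ with hY
  have hZ : X ^ 2 + 1 = (p : ℤ_[p]) * Y ^ 2 := by
    apply Subtype.ext
    push_cast [hX, hY]
    exact h
  have hz : (PadicInt.toZMod X) ^ 2 + 1 = 0 := by
    have := congrArg PadicInt.toZMod hZ
    simp only [map_add, _root_.map_mul, map_pow, _root_.map_one, map_natCast,
      ZMod.natCast_self, zero_mul] at this
    exact this
  have : IsSquare (-1 : ZMod p) := ⟨PadicInt.toZMod X, by rw [← sq]; linear_combination -hz⟩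
  exact absurd (ZMod.exists_sq_eq_neg_one_iff.mp this) (by simp [hp])

/-- For p ≡ 3 mod 4 and τ = τ_p on SL₂(ℚ_p), the element q = diag(1/p, p) lies in the
extended symmetric space but not in the symmetric space; hence the symmetric space is
strictly contained in the extended symmetric space. -/
theorem stmt10 (p : ℕ) [Fact p.Prime] (hp : p % 4 = 3) :
    (!![((p : ℚ_[p]))⁻¹, 0; 0, (p : ℚ_[p])]).det = 1 ∧
    tau (p : ℚ_[p]) !![((p : ℚ_[p]))⁻¹, 0; 0, (p : ℚ_[p])] =
      (!![((p : ℚ_[p]))⁻¹, 0; 0, (p : ℚ_[p])])⁻¹ ∧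
    ¬ ∃ g : Matrix (Fin 2) (Fin 2) ℚ_[p], g.det = 1 ∧
        !![((p : ℚ_[p]))⁻¹, 0; 0, (p : ℚ_[p])] = g * (tau (p : ℚ_[p]) g)⁻¹ := by
  have hp0 : (p : ℚ_[p]) ≠ 0 := Nat.cast_ne_zero.2 (Fact.out : p.Prime).ne_zero
  have hMinv : (!![0,1;(p:ℚ_[p]),0])⁻¹ = !![0, ((p:ℚ_[p]))⁻¹; 1, 0] := by
    apply inv_eq_right_inv
    ext i j
    fin_cases i <;> fin_cases j <;>
      simp [Matrix.mul_apply, Fin.sum_univ_two, mul_inv_cancel₀ hp0]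
  have hqinv : (!![((p : ℚ_[p]))⁻¹, 0; 0, (p : ℚ_[p])])⁻¹ =
      !![(p:ℚ_[p]), 0; 0, ((p:ℚ_[p]))⁻¹] := by
    apply inv_eq_right_inv
    ext i j
    fin_cases i <;> fin_cases j <;>
      simp [Matrix.mul_apply, Fin.sum_univ_two, mul_inv_cancel₀ hp0, inv_mul_cancel₀ hp0]
  refine ⟨?_, ?_, ?_⟩
  · rw [Matrix.det_fin_two_of]
    simp [inv_mul_cancel₀ hp0]
  · rw [hqinv]
    unfold tau
    rw [hMinv]
    ext i j
    fin_cases i <;> fin_cases j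
    all_goals simp [Matrix.mul_apply, Fin.sum_univ_two]
    all_goals try field_simp
    all_goals try ring
  · rintro ⟨g, hdet, heq⟩
    obtain ⟨a, b, c, d, rfl⟩ : ∃ a b c d, g = !![a, b; c, d] :=
      ⟨_, _, _, _, Matrix.eta_fin_two g⟩
    rw [Matrix.det_fin_two_of] at hdet
    have htau : tau (p : ℚ_[p]) !![a, b; c, d] = !![d, c * ((p:ℚ_[p]))⁻¹; (p:ℚ_[p]) * b, a] := by
      unfold tau
      rw [hMinv]
      ext i j
      fin_cases i <;> fin_cases j
      all_goals simp [Matrix.mul_apply, Fin.sum_univ_two]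
      all_goals try field_simp
      all_goals try ring
    have hinv : (tau (p : ℚ_[p]) !![a, b; c, d])⁻¹ =
        !![a, -(c * ((p:ℚ_[p]))⁻¹); -((p:ℚ_[p]) * b), d] := by
      apply inv_eq_right_inv
      rw [htau]
      ext i j
      fin_cases i <;> fin_cases j
      all_goals simp [Matrix.mul_apply, Fin.sum_univ_two]
      all_goals try field_simp
      all_goals try ring
      all_goals try linear_combination hdet
      all_goals try linear_combination -hdet
      all_goals try linear_combination ((p:ℚ_[p]) - 1) * hdet
      all_goals try linear_combination (1 - (p:ℚ_[p])) * hdet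
      all_goals try linear_combination (p:ℚ_[p]) * hdet
      all_goals try linear_combination -(p:ℚ_[p]) * hdet
    rw [hinv] at heq
    have h00 := congrFun (congrFun heq 0) 0
    simp [Matrix.mul_apply, Fin.sum_univ_two] at h00
    have key : ((p:ℚ_[p]) * b) ^ 2 + 1 = (p : ℚ_[p]) * a ^ 2 := by
      field_simp at h00
      linear_combination h00
    exact no_sol p hp ((p:ℚ_[p]) * b) a key
end

section
/- Let k be a field of characteristic ≠ 2 and m ∈ k* with m not a square in k. Then every element of the extended symmetric space Q̃ = {g ∈ SL₂(k) : τ_m(g) = g⁻¹} is semisimple (diagonalizable over the algebraic closure); more precisely, every q ∈ Q̃ with q ≠ ±I has two distinct eigenvalues. -/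
open Matrix

/-- If m is not a square in k, every element of the extended symmetric space of τ_m other
than ±I has two distinct eigenvalues (trace ≠ ±2), hence is semisimple. -/
theorem stmt11 {k : Type*} [Field k] (hchar : (2 : k) ≠ 0) (m : k) (hm : m ≠ 0)
    (hns : ∀ x : k, x ^ 2 ≠ m) :
    ∀ q : Matrix (Fin 2) (Fin 2) k, q.det = 1 → tau m q = q⁻¹ →
      q ≠ 1 → q ≠ -1 → q.trace ≠ 2 ∧ q.trace ≠ -2 := by
  intro q hdet htau hq1 hqm1
  have hJdet : (!![(0:k),1;m,0]).det ≠ 0 := by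
    simp [Matrix.det_fin_two_of, hm]
  have hqinv : q⁻¹ = !![q 1 1, -(q 0 1); -(q 1 0), q 0 0] := by
    rw [Matrix.inv_def, hdet]
    simp [Matrix.adjugate_fin_two]
  have h2 : !![(0:k),1;m,0] * q = q⁻¹ * !![(0:k),1;m,0] := by
    have h := congrArg (· * !![(0:k),1;m,0]) htau
    simp only [tau] at h
    rwa [Matrix.mul_assoc, Matrix.nonsing_inv_mul _ (isUnit_iff_ne_zero.mpr hJdet), Matrix.mul_one] at h
  rw [hqinv, ← Matrix.ext_iff] at h2
  have hc : q 1 0 = -(q 0 1) * m := by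
    have := h2 0 0
    simp [Matrix.mul_apply, Fin.sum_univ_two] at this
    linear_combination this
  rw [Matrix.det_fin_two] at hdet
  rw [Matrix.trace_fin_two]
  set a := q 0 0 with ha'
  set b := q 0 1 with hb'
  set d := q 1 1 with hd'
  have hdet' : a * d + b * b * m = 1 := by rw [hc] at hdet; linear_combination hdet
  constructor
  · intro ht
    by_cases hb : b = 0
    · have ha : a = 1 := by
        have h0 : (a - 1) ^ 2 = 0 := by
          linear_combination a * ht - hdet' + m * b * hb
        have h1 := pow_eq_zero_iff (n := 2) (by norm_num) |>.mp h0
        linear_combination h1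
      have hd : d = 1 := by linear_combination ht - ha
      apply hq1
      have hc0 : q 1 0 = 0 := by rw [hc, hb]; ring
      rw [Matrix.eta_fin_two q, ← ha', ← hb', ← hd', ha, hb, hd, hc0, Matrix.one_fin_two]
    · refine absurd ?_ (hns ((a - 1) / b))
      have h0 : (a - 1) ^ 2 = m * b ^ 2 := by linear_combination a * ht - hdet'
      rw [div_pow, h0, mul_div_assoc, div_self (pow_ne_zero 2 hb), mul_one]
  · intro ht
    by_cases hb : b = 0
    · have ha : a = -1 := by
        have h0 : (a + 1) ^ 2 = 0 := by
          linear_combination a * ht - hdet' + m * b * hb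
        have h1 := pow_eq_zero_iff (n := 2) (by norm_num) |>.mp h0
        linear_combination h1
      have hd : d = -1 := by linear_combination ht - ha
      apply hqm1
      have hc0 : q 1 0 = 0 := by rw [hc, hb]; ring
      have hneg : (-1 : Matrix (Fin 2) (Fin 2) k) = !![-1,0;0,-1] := by
        ext i j; fin_cases i <;> fin_cases j <;> simp [Matrix.one_fin_two]
      rw [Matrix.eta_fin_two q, ← ha', ← hb', ← hd', ha, hb, hd, hc0, hneg]
    · refine absurd ?_ (hns ((a + 1) / b))
      have h0 : (a + 1) ^ 2 = m * b ^ 2 := by linear_combination a * ht - hdet'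
      rw [div_pow, h0, mul_div_assoc, div_self (pow_ne_zero 2 hb), mul_one]
end

section
/- Let k be a field of characteristic ≠ 2 and τ = τ₁ conjugation by [[0,1],[1,0]] on SL₂(k). For any x ∈ k with x ≠ −1, set g = [[x+2, x+1],[−(x+1), −x]] ∈ SL₂(k). Then q = g τ(g)⁻¹ = [[3+2x, 2+2x],[−(2+2x), −(2x+1)]] has trace 2 but q ≠ I; hence the symmetric space of τ₁ contains non-semisimple elements. -/
open Matrix

/-- For τ = τ₁ and x ≠ -1, g = [[x+2,x+1],[-(x+1),-x]] ∈ SL₂(k) and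
q = g τ(g)⁻¹ = [[3+2x, 2+2x],[-(2+2x), -(2x+1)]] has trace 2 but q ≠ I;
hence the symmetric space of τ₁ contains non-semisimple elements. -/
theorem stmt12 {k : Type*} [Field k] (hchar : (2 : k) ≠ 0) :
    ∀ x : k, x ≠ -1 →
      (!![x + 2, x + 1; -(x + 1), -x]).det = 1 ∧
      !![x + 2, x + 1; -(x + 1), -x] * (tau 1 !![x + 2, x + 1; -(x + 1), -x])⁻¹ =
        !![3 + 2 * x, 2 + 2 * x; -(2 + 2 * x), -(2 * x + 1)] ∧
      (!![3 + 2 * x, 2 + 2 * x; -(2 + 2 * x), -(2 * x + 1)]).trace = 2 ∧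
      !![3 + 2 * x, 2 + 2 * x; -(2 + 2 * x), -(2 * x + 1)] ≠ 1 := by
  intro x hx
  have hdet : (!![x + 2, x + 1; -(x + 1), -x]).det = 1 := by
    simp [det_fin_two_of]; ring
  refine ⟨hdet, ?_, ?_, ?_⟩
  · have hM : (!![(0:k),1;1,0])⁻¹ = !![0,1;1,0] := by
      rw [Matrix.inv_def]
      norm_num [adjugate_fin_two_of, det_fin_two_of]
    have htau : tau 1 !![x + 2, x + 1; -(x + 1), -x] =
        !![-x, -(x+1); x+1, x+2] := by
      unfold tau
      rw [hM]
      ext i j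
      fin_cases i <;> fin_cases j <;>
        simp [Matrix.mul_apply, Fin.sum_univ_two]
    rw [htau, Matrix.inv_def]
    have hd : (!![(-x:k), -(x+1); x+1, x+2]).det = 1 := by
      simp [det_fin_two_of]; ring
    rw [hd]
    simp only [adjugate_fin_two_of, inv_one, one_smul]
    ext i j
    fin_cases i <;> fin_cases j <;>
      simp [Matrix.mul_apply, Fin.sum_univ_two] <;> ring
  · simp [Matrix.trace_fin_two_of]; ring
  · intro h
    have h01 := congrFun (congrFun h 0) 1
    simp [Matrix.one_apply] at h01
    have h2 : (2:k) * (x + 1) = 0 := by linear_combination h01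
    rcases mul_eq_zero.mp h2 with h | h
    · exact hchar h
    · exact hx (by linear_combination h)
end

section
/- Let k be a field of characteristic 2 and let τ₀ be conjugation by N = [[1,1],[0,1]] on SL₂(k). Then the fixed-point group of τ₀ is {[[a,b],[0,a]] : a² = 1, b ∈ k}, which is a unipotent subgroup, and the extended symmetric space is {[[x,y],[z,x+z]] : x² + xz + yz = 1}. -/
open Matrix

noncomputable def tau0 {k : Type*} [Field k] (g : Matrix (Fin 2) (Fin 2) k) :
    Matrix (Fin 2) (Fin 2) k := !![1,1;0,1] * g * (!![1,1;0,1])⁻¹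

lemma Ninv {k : Type*} [Field k] :
    (!![1,1;0,1] : Matrix (Fin 2) (Fin 2) k)⁻¹ = !![1,-1;0,1] := by
  apply inv_eq_right_inv
  rw [Matrix.mul_fin_two, Matrix.one_fin_two]
  norm_num

/-- In characteristic 2, for τ₀ = Inn([[1,1],[0,1]]) on SL₂(k): the fixed-point group is
{[[a,b],[0,a]] : a² = 1}, which is unipotent, and the extended symmetric space is
{[[x,y],[z,x+z]] : x² + xz + yz = 1}. -/
theorem stmt19 {k : Type*} [Field k] (hchar : (2 : k) = 0) :
    ({g : Matrix (Fin 2) (Fin 2) k | g.det = 1 ∧ tau0 g = g} =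
        {g : Matrix (Fin 2) (Fin 2) k | ∃ a b : k, a ^ 2 = 1 ∧ g = !![a, b; 0, a]}) ∧
    (∀ g : Matrix (Fin 2) (Fin 2) k, (g.det = 1 ∧ tau0 g = g) → (g - 1) ^ 2 = 0) ∧
    ({g : Matrix (Fin 2) (Fin 2) k | g.det = 1 ∧ tau0 g = g⁻¹} =
        {g : Matrix (Fin 2) (Fin 2) k |
          ∃ x y z : k, x ^ 2 + x * z + y * z = 1 ∧ g = !![x, y; z, x + z]}) := by
  have hneg : ∀ x : k, -x = x := fun x => by linear_combination -x * hchar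
  have hfix : ∀ g : Matrix (Fin 2) (Fin 2) k, (g.det = 1 ∧ tau0 g = g) ↔
      ∃ a b : k, a ^ 2 = 1 ∧ g = !![a, b; 0, a] := by
    intro g
    constructor
    · rintro ⟨hdet, hf⟩
      have hg := Matrix.eta_fin_two g
      rw [hg] at hdet hf
      rw [tau0, Ninv, Matrix.mul_fin_two, Matrix.mul_fin_two, ← Matrix.ext_iff] at hf
      simp only [Fin.forall_fin_two] at hf
      obtain ⟨⟨h00, h01⟩, h10, h11⟩ := hf
      simp [Matrix.cons_val_zero, Matrix.cons_val_one] at h00 h01 h10 h11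
      rw [Matrix.det_fin_two_of] at hdet
      have hc : g 1 0 = 0 := h00
      have hd : g 1 1 = g 0 0 := by linear_combination h01 + h00
      refine ⟨g 0 0, g 0 1, ?_, ?_⟩
      · linear_combination hdet - g 0 0 * hd + g 0 1 * hc
      · conv_lhs => rw [hg]
        rw [hc, hd]
    · rintro ⟨a, b, ha, rfl⟩
      constructor
      · rw [Matrix.det_fin_two_of]; linear_combination ha
      · rw [tau0, Ninv, Matrix.mul_fin_two, Matrix.mul_fin_two, ← Matrix.ext_iff]
        simp only [Fin.forall_fin_two]
        norm_num
  refine ⟨Set.ext fun g => hfix g, ?_, ?_⟩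
  · intro g hg
    obtain ⟨a, b, ha, rfl⟩ := (hfix g).1 hg
    have h1 : (!![a, b; 0, a] : Matrix (Fin 2) (Fin 2) k) - 1 = !![a - 1, b; 0, a - 1] := by
      rw [Matrix.one_fin_two, ← Matrix.ext_iff]
      simp only [Fin.forall_fin_two]
      simp [Matrix.sub_apply]
    rw [h1, sq, Matrix.mul_fin_two, ← Matrix.ext_iff]
    simp only [Fin.forall_fin_two]
    norm_num
    have ha1 : a = 1 := by
      have h2 : (a - 1) ^ 2 = 0 := by linear_combination ha + (1 - a) * hchar
      have := pow_eq_zero_iff (n := 2) (by norm_num) |>.mp h2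
      linear_combination this
    refine ⟨⟨by linear_combination ha1, by linear_combination 2 * b * ha1⟩,
      by linear_combination ha1⟩
  · ext g
    simp only [Set.mem_setOf_eq]
    constructor
    · rintro ⟨hdet, hf⟩
      have hg := Matrix.eta_fin_two g
      rw [hg] at hdet hf
      rw [Matrix.det_fin_two_of] at hdet
      have hinv : (!![g 0 0, g 0 1; g 1 0, g 1 1] : Matrix (Fin 2) (Fin 2) k)⁻¹ =
          !![g 1 1, -(g 0 1); -(g 1 0), g 0 0] := by
        rw [Matrix.inv_def, Matrix.adjugate_fin_two, Matrix.det_fin_two_of, hdet]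
        simp
      rw [tau0, Ninv, Matrix.mul_fin_two, Matrix.mul_fin_two, hinv, ← Matrix.ext_iff] at hf
      simp only [Fin.forall_fin_two] at hf
      obtain ⟨⟨h00, h01⟩, h10, h11⟩ := hf
      simp [Matrix.cons_val_zero, Matrix.cons_val_one] at h00 h01 h10 h11
      refine ⟨g 0 0, g 0 1, g 1 0, ?_, ?_⟩
      · linear_combination hdet + g 0 0 * h00 + g 0 1 * g 1 0 * hchar
      · conv_lhs => rw [hg]
        rw [← Matrix.ext_iff]
        simp only [Fin.forall_fin_two]
        norm_num
        linear_combination -h00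
    · rintro ⟨x, y, z, hxyz, rfl⟩
      have hdet : (!![x, y; z, x + z] : Matrix (Fin 2) (Fin 2) k).det = 1 := by
        rw [Matrix.det_fin_two_of]; linear_combination hxyz - y * z * hchar
      refine ⟨hdet, ?_⟩
      have hinv : (!![x, y; z, x + z] : Matrix (Fin 2) (Fin 2) k)⁻¹ =
          !![x + z, -y; -z, x] := by
        rw [Matrix.inv_def, Matrix.adjugate_fin_two, hdet]
        simp
      rw [tau0, Ninv, Matrix.mul_fin_two, Matrix.mul_fin_two, hinv, ← Matrix.ext_iff]
      simp only [Fin.forall_fin_two]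
      norm_num
      exact ⟨by linear_combination y * hchar, by linear_combination z * hchar⟩
end
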